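/- arXiv:1606.04756 — 10 statements merged into one kernel-verified Lean document; each statement's English description precedes it below -/
import Mathlib

section
/- If α_i = 0 for all i, then Σ_{k=i}^{n} C(k,i)·r^{k-i}·w_{m,r;0}(n,k) = δ_{n,i} (Kronecker delta). -/
open Finset Polynomial

theorem stmt_2 (m r : ℝ) (hm : m ≠ 0) (w : ℕ → ℕ → ℝ)
    (hw : ∀ n : ℕ, ∀ x : ℝ, m ^ n * x ^ n =
      ∑ k ∈ range (n + 1), w n k * (m * x + r) ^ k) :
    ∀ n i : ℕ, ∑ k ∈ Icc i n, (k.choose i : ℝ) * r ^ (k - i) * w n k =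
      if n = i then 1 else 0 := by
  -- First: w n k = choose n k * (-r)^(n-k) for k ≤ n
  have hwval : ∀ n k : ℕ, k ≤ n → w n k = (n.choose k : ℝ) * (-r) ^ (n - k) := by
    intro n k hk
    have key : ∀ y : ℝ, ∑ j ∈ range (n + 1), w n j * y ^ j = (y - r) ^ n := by
      intro y
      have := hw n ((y - r) / m)
      rw [← mul_pow] at this
      rw [mul_div_cancel₀ _ hm] at this
      simp only [sub_add_cancel] at this
      exact this.symm
    -- polynomial identity
    have hp : (∑ j ∈ range (n + 1), C (w n j) * X ^ j : ℝ[X]) = (X + C (-r)) ^ n := by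
      apply Polynomial.funext
      intro y
      simp only [eval_finset_sum, eval_mul, eval_pow, eval_C, eval_X, eval_add, eval_pow]
      rw [key y]
      ring_nf
    have := congrArg (fun p : ℝ[X] => p.coeff k) hp
    simp only [finset_sum_coeff, coeff_C_mul, coeff_X_pow, coeff_X_add_C_pow] at this
    rw [Finset.sum_eq_single k (fun j _ hj => by simp [Ne.symm hj]) (fun h => by
      exact absurd (Finset.mem_range.mpr (Nat.lt_succ_of_le hk)) h)] at this
    simpa [mul_comm] using this
  intro n i
  by_cases hin : i ≤ n
  · have hIcc : Icc i n = Ico i (n + 1) := by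
      rw [Finset.Ico_add_one_right_eq_Icc]
    rw [hIcc, Finset.sum_Ico_eq_sum_range]
    have hrw : ∀ j ∈ range (n + 1 - i),
        ((i + j).choose i : ℝ) * r ^ (i + j - i) * w n (i + j) =
        (n.choose i : ℝ) * (((n - i).choose j : ℝ) * r ^ j * (-r) ^ (n - i - j)) := by
      intro j hj
      rw [Finset.mem_range] at hj
      have hjle : i + j ≤ n := by omega
      rw [hwval n (i + j) hjle]
      have hc : (n.choose (i + j) : ℝ) * ((i + j).choose i : ℝ) =
          (n.choose i : ℝ) * ((n - i).choose (i + j - i) : ℝ) := by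
        rw [← Nat.cast_mul, ← Nat.cast_mul, Nat.choose_mul (n := n) (Nat.le_add_right i j)]
      have h1 : i + j - i = j := by omega
      have h2 : n - (i + j) = n - i - j := by omega
      rw [h1] at hc ⊢
      rw [h2]
      linear_combination (r ^ j * (-r) ^ (n - i - j)) * hc
    rw [Finset.sum_congr rfl hrw, ← Finset.mul_sum]
    have hN : n + 1 - i = (n - i) + 1 := by omega
    rw [hN]
    have hsum : ∑ j ∈ range ((n - i) + 1),
        ((n - i).choose j : ℝ) * r ^ j * (-r) ^ (n - i - j) = (r + (-r)) ^ (n - i) := by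
      rw [add_pow]
      apply Finset.sum_congr rfl
      intro j _
      ring
    rw [hsum]
    simp only [add_neg_cancel]
    rcases Nat.eq_or_lt_of_le hin with h | h
    · subst h; simp
    · have : n - i ≠ 0 := by omega
      rw [zero_pow this, mul_zero, if_neg (by omega)]
  · rw [Finset.Icc_eq_empty (by omega), Finset.sum_empty, if_neg (by omega)]
end

section
/- If α_i = α for all i, then m^{n-i}·C(n,i)·(-α)^{n-i} = Σ_{k=i}^{n} C(k,i)·r^{k-i}·w_{m,r;α}(n,k) for 0 ≤ i ≤ n. -/
open Finset Polynomial

theorem stmt_3 (m r α : ℝ) (hm : m ≠ 0) (w : ℕ → ℕ → ℝ)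
    (hw : ∀ n : ℕ, ∀ x : ℝ, m ^ n * (x - α) ^ n =
      ∑ k ∈ range (n + 1), w n k * (m * x + r) ^ k) :
    ∀ n i : ℕ, i ≤ n →
      m ^ (n - i) * (n.choose i : ℝ) * (-α) ^ (n - i) =
        ∑ k ∈ Icc i n, (k.choose i : ℝ) * r ^ (k - i) * w n k := by
  intro n i hi
  -- for all z, (z - m*α)^n = ∑ w n k * (z + r)^k
  have hz : ∀ z : ℝ, (z - m * α) ^ n = ∑ k ∈ range (n + 1), w n k * (z + r) ^ k := by
    intro z
    have h := hw n (z / m)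
    have hzm : m * (z / m) = z := by field_simp
    calc (z - m * α) ^ n = (m * (z / m - α)) ^ n := by rw [mul_sub, hzm]
      _ = m ^ n * (z / m - α) ^ n := by rw [mul_pow]
      _ = ∑ k ∈ range (n + 1), w n k * (m * (z / m) + r) ^ k := h
      _ = ∑ k ∈ range (n + 1), w n k * (z + r) ^ k := by rw [hzm]
  have hP : ((X - C (m * α)) ^ n : ℝ[X]) =
      ∑ k ∈ range (n + 1), C (w n k) * (X + C r) ^ k := by
    apply Polynomial.funext
    intro z
    simpa [eval_finset_sum] using hz z
  have hc := congrArg (fun p : ℝ[X] => p.coeff i) hP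
  simp only [finset_sum_coeff, coeff_C_mul, coeff_X_add_C_pow] at hc
  rw [show ((X : ℝ[X]) - C (m * α)) = X + C (-(m * α)) by rw [map_neg, sub_eq_add_neg],
    coeff_X_add_C_pow] at hc
  have hsub : ∑ k ∈ range (n + 1), w n k * (r ^ (k - i) * (k.choose i : ℝ))
      = ∑ k ∈ Icc i n, (k.choose i : ℝ) * r ^ (k - i) * w n k := by
    rw [← Finset.sum_subset (f := fun k => w n k * (r ^ (k - i) * (k.choose i : ℝ)))
      (show Icc i n ⊆ range (n + 1) by intro k hk; simp at hk ⊢; omega)]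
    · exact Finset.sum_congr rfl fun k _ => by ring
    · intro k hk hk'
      simp only [mem_range, mem_Icc, not_and, not_le] at hk hk'
      have : k < i := by omega
      rw [Nat.choose_eq_zero_of_lt this]
      simp
  rw [hsub] at hc
  rw [← hc]
  rw [show (-(m * α)) ^ (n - i) = m ^ (n - i) * (-α) ^ (n - i) by rw [← mul_pow]; ring_nf]
  ring
end

section
/- The generalized r-Whitney numbers of the second kind have the explicit formula W_{m,r;α}(n,k) = Σ_{i=0}^{k} (r + m·α_i)^n / (m^k · ∏_{j=0, j≠i}^{k} (α_i - α_j)). -/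
open Finset Polynomial

lemma coeffB (k : ℕ) (α : ℕ → ℝ) (hα : Set.InjOn α (range (k+1)))
    (p : Polynomial ℝ) (hp : p.degree < k+1) :
    ∑ i ∈ range (k+1), p.eval (α i) * Lagrange.nodalWeight (range (k+1)) α i = p.coeff k := by
  have hcard : #(range (k+1)) = k+1 := card_range _
  have hpi := Lagrange.eq_interpolate hα (by rw [hcard]; exact_mod_cast hp)
  conv_rhs => rw [hpi]
  rw [Lagrange.interpolate_apply, finset_sum_coeff]
  refine Finset.sum_congr rfl fun i hi => ?_
  rw [coeff_C_mul, Lagrange.basis_eq_prod_sub_inv_mul_nodal_div hi,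
    ← Lagrange.nodal_erase_eq_nodal_div hi, coeff_C_mul]
  have hm : (Lagrange.nodal ((range (k+1)).erase i) α).Monic := Lagrange.nodal_monic
  have hd : (Lagrange.nodal ((range (k+1)).erase i) α).natDegree = k := by
    rw [Lagrange.natDegree_nodal, card_erase_of_mem hi, hcard]; omega
  have h1 := hm.coeff_natDegree
  rw [hd] at h1
  rw [h1]; ring

lemma deltaB (k l : ℕ) (hl : l ≤ k) (α : ℕ → ℝ) (hα : Set.InjOn α (range (k+1))) :
    ∑ i ∈ range (k+1), (∏ j ∈ range l, (α i - α j)) * Lagrange.nodalWeight (range (k+1)) α i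
      = if l = k then 1 else 0 := by
  have := coeffB k α hα (Lagrange.nodal (range l) α)
    (by rw [Lagrange.degree_nodal, card_range]; exact_mod_cast Nat.lt_succ_of_le hl)
  simp only [Lagrange.eval_nodal] at this
  rw [this]
  rcases eq_or_lt_of_le hl with rfl | hlt
  · have hm : (Lagrange.nodal (range l) α).Monic := Lagrange.nodal_monic
    have hd : (Lagrange.nodal (range l) α).natDegree = l := by
      rw [Lagrange.natDegree_nodal, card_range]
    have h1 := hm.coeff_natDegree
    rw [hd] at h1
    simp [h1]
  · rw [coeff_eq_zero_of_natDegree_lt (by rw [Lagrange.natDegree_nodal, card_range]; exact hlt)]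
    simp [Nat.ne_of_lt hlt]

theorem stmt_6 (m r : ℝ) (hm : m ≠ 0) (α : ℕ → ℝ)
    (hα : ∀ i j : ℕ, i ≠ j → α i ≠ α j) (W : ℕ → ℕ → ℝ)
    (hW : ∀ n : ℕ, ∀ x : ℝ, (m * x + r) ^ n =
      ∑ k ∈ range (n + 1), W n k * m ^ k * ∏ i ∈ range k, (x - α i)) :
    ∀ n k : ℕ, k ≤ n →
      W n k = ∑ i ∈ range (k + 1),
        (r + m * α i) ^ n / (m ^ k * ∏ j ∈ (range (k + 1)).erase i, (α i - α j)) := by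
  intro n k hk
  have hinj : Set.InjOn α (range (k+1)) := fun i _ j _ h => by
    by_contra hne; exact hα i j hne h
  set w : ℕ → ℝ := Lagrange.nodalWeight (range (k+1)) α with hw
  have hS : ∑ i ∈ range (k+1), (m * α i + r) ^ n * w i = W n k * m ^ k := by
    have : ∀ i ∈ range (k+1), (m * α i + r) ^ n * w i
        = ∑ l ∈ range (n+1), W n l * m ^ l * (∏ j ∈ range l, (α i - α j)) * w i := by
      intro i _
      rw [hW n (α i), sum_mul]
    rw [sum_congr rfl this, sum_comm]
    rw [Finset.sum_eq_single k]
    · have hd := deltaB k k le_rfl α hinj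
      rw [if_pos rfl] at hd
      calc ∑ i ∈ range (k+1), W n k * m ^ k * (∏ j ∈ range k, (α i - α j)) * w i
          = W n k * m ^ k * ∑ i ∈ range (k+1), (∏ j ∈ range k, (α i - α j)) * w i := by
            rw [mul_sum]; exact sum_congr rfl fun i _ => by ring
        _ = W n k * m ^ k := by rw [hd, mul_one]
    · intro l hl hne
      rcases le_or_gt l k with hlk | hkl
      · have hd := deltaB k l hlk α hinj
        rw [if_neg hne] at hd
        calc ∑ i ∈ range (k+1), W n l * m ^ l * (∏ j ∈ range l, (α i - α j)) * w i
            = W n l * m ^ l * ∑ i ∈ range (k+1), (∏ j ∈ range l, (α i - α j)) * w i := by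
              rw [mul_sum]; exact sum_congr rfl fun i _ => by ring
          _ = 0 := by rw [hd, mul_zero]
      · refine Finset.sum_eq_zero fun i hi => ?_
        have hi' : i ∈ range l := mem_range.mpr (lt_of_lt_of_le (mem_range.mp hi)
          (Nat.succ_le_of_lt hkl))
        rw [Finset.prod_eq_zero hi' (sub_self (α i))]
        ring
    · intro h; exact absurd (mem_range.mpr (Nat.lt_succ_of_le hk)) h
  have hmk : (m : ℝ) ^ k ≠ 0 := pow_ne_zero _ hm
  have : W n k = (∑ i ∈ range (k+1), (m * α i + r) ^ n * w i) * (m ^ k)⁻¹ := by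
    rw [hS, mul_assoc, mul_inv_cancel₀ hmk, mul_one]
  rw [this, sum_mul]
  refine sum_congr rfl fun i _ => ?_
  rw [hw]
  simp only [Lagrange.nodalWeight]
  rw [div_eq_mul_inv, mul_inv, prod_inv_distrib]
  ring_nf
end

section
/- The exponential generating function Σ_{n≥k} W_{m,r;α}(n,k)·t^n/n! equals Σ_{i=0}^{k} e^{(r+m·α_i)t} / ∏_{j=0, j≠i}^{k} (m·α_i - m·α_j). -/
open Finset Polynomial

lemma aux_coeff_basis {s : Finset ℕ} {v : ℕ → ℝ} {i : ℕ} (hi : i ∈ s) :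
    (Lagrange.basis s v i).coeff (s.card - 1) = Lagrange.nodalWeight s v i := by
  rw [Lagrange.basis_eq_prod_sub_inv_mul_nodal_div hi, ← Lagrange.nodal_erase_eq_nodal_div hi,
    coeff_C_mul]
  have hm : (Lagrange.nodal (s.erase i) v).Monic := Lagrange.nodal_monic
  have hd : (Lagrange.nodal (s.erase i) v).natDegree = s.card - 1 := by
    rw [Lagrange.natDegree_nodal, card_erase_of_mem hi]
  rw [← hd, hm.coeff_natDegree, mul_one]

lemma aux_coeff_eq_sum {k : ℕ} {v : ℕ → ℝ} (hv : Set.InjOn v (range (k + 1))) (p : ℝ[X])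
    (hp : p.degree < (k + 1 : ℕ)) :
    p.coeff k = ∑ i ∈ range (k + 1),
      p.eval (v i) * Lagrange.nodalWeight (range (k + 1)) v i := by
  have h := Lagrange.eq_interpolate hv (by simpa using hp)
  conv_lhs => rw [h]
  rw [Lagrange.interpolate_apply, finset_sum_coeff]
  refine sum_congr rfl fun i hi => ?_
  rw [coeff_C_mul]
  have := aux_coeff_basis (s := range (k + 1)) (v := v) hi
  rw [card_range] at this
  simp only [Nat.add_sub_cancel] at this
  rw [this]

theorem stmt_7 (m r : ℝ) (hm : m ≠ 0) (α : ℕ → ℝ)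
    (hα : ∀ i j : ℕ, i ≠ j → α i ≠ α j) (W : ℕ → ℕ → ℝ)
    (hW : ∀ n : ℕ, ∀ x : ℝ, (m * x + r) ^ n =
      ∑ k ∈ range (n + 1), W n k * m ^ k * ∏ i ∈ range k, (x - α i))
    (hWz : ∀ n k : ℕ, n < k → W n k = 0) :
    ∀ (k : ℕ) (t : ℝ),
      ∑' n : ℕ, W n k * t ^ n / n.factorial =
        ∑ i ∈ range (k + 1),
          Real.exp ((r + m * α i) * t) /
            ∏ j ∈ (range (k + 1)).erase i, (m * α i - m * α j) := by
  intro k t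
  have hinj : ∀ k : ℕ, Set.InjOn α (range (k + 1)) := by
    intro k i _ j _ hij
    by_contra h
    exact hα i j h hij
  -- the explicit formula for W
  have hWform : ∀ n : ℕ, W n k = ∑ i ∈ range (k + 1),
      (m * α i + r) ^ n /
        ∏ j ∈ (range (k + 1)).erase i, (m * α i - m * α j) := by
    intro n
    set p : ℝ[X] := ∑ j ∈ range (k + 1), C (W n j * m ^ j) * Lagrange.nodal (range j) α with hp
    have hdeg : p.degree < (k + 1 : ℕ) := by
      refine lt_of_le_of_lt (degree_sum_le _ _) ?_
      rw [Finset.sup_lt_iff (by exact_mod_cast WithBot.bot_lt_coe (k + 1))]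
      intro j hj
      refine lt_of_le_of_lt (degree_mul_le _ _) ?_
      refine lt_of_le_of_lt (add_le_add degree_C_le le_rfl) ?_
      rw [zero_add, Lagrange.degree_nodal, card_range]
      exact_mod_cast Nat.lt_succ_of_le (Nat.lt_succ_iff.mp (mem_range.mp hj))
    -- evaluation of p at nodes
    have heval : ∀ i ∈ range (k + 1), p.eval (α i) = (m * α i + r) ^ n := by
      intro i hi
      have hi' : i ≤ k := Nat.lt_succ_iff.mp (mem_range.mp hi)
      have hpe : p.eval (α i) =
          ∑ j ∈ range (k + 1), W n j * m ^ j * ∏ l ∈ range j, (α i - α l) := by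
        rw [hp, eval_finset_sum]
        refine sum_congr rfl fun j _ => ?_
        rw [eval_mul, eval_C, Lagrange.eval_nodal]
      rw [hpe, hW n (α i)]
      set g : ℕ → ℝ := fun j => W n j * m ^ j * ∏ l ∈ range j, (α i - α l) with hg
      have hgz : ∀ j, k < j ∨ n < j → g j = 0 := by
        intro j hj
        rcases hj with hj | hj
        · have hij : i ∈ range j := mem_range.mpr (lt_of_le_of_lt hi' hj)
          have : ∏ l ∈ range j, (α i - α l) = 0 :=
            prod_eq_zero hij (by ring)
          rw [hg]; simp [this]
        · rw [hg]; simp [hWz n j hj]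
      have h1 : ∑ j ∈ range (n + 1), g j = ∑ j ∈ range (max n k + 1), g j := by
        refine sum_subset (f := g) (range_subset_range.mpr (Nat.succ_le_succ (Nat.le_max_left n k))) ?_
        intro j _ hj
        rw [mem_range, not_lt] at hj
        exact hgz j (Or.inr (by omega))
      have h2 : ∑ j ∈ range (k + 1), g j = ∑ j ∈ range (max n k + 1), g j := by
        refine sum_subset (f := g) (range_subset_range.mpr (Nat.succ_le_succ (Nat.le_max_right n k))) ?_
        intro j _ hj
        rw [mem_range, not_lt] at hj
        exact hgz j (Or.inl (by omega))
      rw [h1, ← h2]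
    -- coefficient of degree k of p
    have hcoeff : p.coeff k = W n k * m ^ k := by
      rw [hp, finset_sum_coeff]
      have hz : ∀ j ∈ range (k + 1), j ≠ k →
          (C (W n j * m ^ j) * Lagrange.nodal (range j) α).coeff k = 0 := by
        intro j hj hjk
        rw [coeff_C_mul, coeff_eq_zero_of_natDegree_lt, mul_zero]
        rw [Lagrange.natDegree_nodal, card_range]
        exact lt_of_le_of_ne (Nat.lt_succ_iff.mp (mem_range.mp hj)) hjk
      rw [Finset.sum_eq_single_of_mem k (self_mem_range_succ k) hz, coeff_C_mul]
      have hmon : (Lagrange.nodal (range k) α).Monic := Lagrange.nodal_monic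
      have hnd : (Lagrange.nodal (range k) α).natDegree = k := by
        rw [Lagrange.natDegree_nodal, card_range]
      have h1 := hmon.coeff_natDegree
      rw [hnd] at h1
      rw [h1, mul_one]
    have := aux_coeff_eq_sum (hinj k) p hdeg
    rw [hcoeff] at this
    have hmk : (m : ℝ) ^ k ≠ 0 := pow_ne_zero _ hm
    have hW' : W n k = (∑ i ∈ range (k + 1),
        p.eval (α i) * Lagrange.nodalWeight (range (k + 1)) α i) / m ^ k := by
      rw [eq_div_iff hmk, ← this]
    rw [hW']
    rw [Finset.sum_div]
    refine sum_congr rfl fun i hi => ?_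
    rw [heval i hi]
    have hc : ((range (k + 1)).erase i).card = k := by
      simp [card_erase_of_mem hi]
    have hprod : ∏ j ∈ (range (k + 1)).erase i, (m * α i - m * α j) =
        m ^ k * ∏ j ∈ (range (k + 1)).erase i, (α i - α j) := by
      calc ∏ j ∈ (range (k + 1)).erase i, (m * α i - m * α j)
          = ∏ j ∈ (range (k + 1)).erase i, (m * (α i - α j)) := by
            refine prod_congr rfl fun j _ => by ring
        _ = (∏ _j ∈ (range (k + 1)).erase i, m) *
              ∏ j ∈ (range (k + 1)).erase i, (α i - α j) := by
            rw [← prod_mul_distrib]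
        _ = m ^ k * ∏ j ∈ (range (k + 1)).erase i, (α i - α j) := by
            rw [prod_const, hc]
    rw [hprod, Lagrange.nodalWeight, prod_inv_distrib]
    rw [div_eq_mul_inv, div_eq_mul_inv, mul_inv]
    ring
  -- now the tsum computation
  have hexp : ∀ x : ℝ, Real.exp x = ∑' n : ℕ, x ^ n / n.factorial := by
    intro x
    rw [Real.exp_eq_exp_ℝ, NormedSpace.exp_eq_tsum_div]
  have hterm : ∀ n : ℕ, W n k * t ^ n / n.factorial =
      ∑ i ∈ range (k + 1), (((m * α i + r) * t) ^ n / n.factorial) *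
        (∏ j ∈ (range (k + 1)).erase i, (m * α i - m * α j))⁻¹ := by
    intro n
    rw [hWform n, Finset.sum_mul, Finset.sum_div]
    refine sum_congr rfl fun i _ => ?_
    simp only [mul_pow, div_eq_mul_inv]
    ring
  calc ∑' n : ℕ, W n k * t ^ n / n.factorial
      = ∑' n : ℕ, ∑ i ∈ range (k + 1), (((m * α i + r) * t) ^ n / n.factorial) *
          (∏ j ∈ (range (k + 1)).erase i, (m * α i - m * α j))⁻¹ := by
        exact tsum_congr hterm
    _ = ∑ i ∈ range (k + 1), ∑' n : ℕ, (((m * α i + r) * t) ^ n / n.factorial) *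
          (∏ j ∈ (range (k + 1)).erase i, (m * α i - m * α j))⁻¹ := by
        refine Summable.tsum_finsetSum fun i _ => ?_
        exact (Real.summable_pow_div_factorial _).mul_right _
    _ = ∑ i ∈ range (k + 1),
          Real.exp ((r + m * α i) * t) /
            ∏ j ∈ (range (k + 1)).erase i, (m * α i - m * α j) := by
        refine sum_congr rfl fun i _ => ?_
        rw [tsum_mul_right, ← hexp]
        rw [div_eq_mul_inv]
        ring_nf
end

section
/- With parameters α_i = i^p, the relation m^{n-i}·s_1(n,i,p) = Σ_{k=i}^{n} C(k,i)·r^{k-i}·w_{m,r;i^p}(n,k) holds, where s_1(n,i,p) are the p-Stirling numbers of the first kind. -/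
open Finset Polynomial

theorem stmt_11 (m r : ℝ) (hm : m ≠ 0) (p : ℕ) (hp : 0 < p)
    (s₁ : ℕ → ℕ → ℝ) (w : ℕ → ℕ → ℝ)
    (hs : ∀ n : ℕ, ∀ x : ℝ, ∏ j ∈ range n, (x - (j : ℝ) ^ p) =
      ∑ i ∈ range (n + 1), s₁ n i * x ^ i)
    (hw : ∀ n : ℕ, ∀ x : ℝ, m ^ n * ∏ j ∈ range n, (x - (j : ℝ) ^ p) =
      ∑ k ∈ range (n + 1), w n k * (m * x + r) ^ k) :
    ∀ n i : ℕ, i ≤ n →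
      m ^ (n - i) * s₁ n i = ∑ k ∈ Icc i n, (k.choose i : ℝ) * r ^ (k - i) * w n k := by
  intro n i hin
  -- polynomials
  set P : ℝ[X] := ∑ j ∈ range (n + 1), C (m ^ n * s₁ n j) * X ^ j with hP
  set Q : ℝ[X] := ∑ k ∈ range (n + 1), C (w n k) * (C m * X + C r) ^ k with hQ
  have hPQ : P = Q := by
    apply Polynomial.funext
    intro x
    simp only [hP, hQ, eval_finset_sum, eval_mul, eval_pow, eval_add, eval_C, eval_X]
    rw [show ∑ j ∈ range (n + 1), m ^ n * s₁ n j * x ^ j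
        = m ^ n * ∑ j ∈ range (n + 1), s₁ n j * x ^ j by rw [mul_sum]; simp [mul_assoc],
      ← hs n x, hw n x]
  have hPc : P.coeff i = m ^ n * s₁ n i := by
    rw [hP, finset_sum_coeff]
    rw [Finset.sum_eq_single i]
    · rw [coeff_C_mul, coeff_X_pow, if_pos rfl, mul_one]
    · intro b _ hb
      rw [coeff_C_mul, coeff_X_pow, if_neg (fun hq => hb hq.symm), mul_zero]
    · intro h
      exact absurd (mem_range.mpr (Nat.lt_succ_of_le hin)) h
  have hpow : ∀ k j : ℕ, ((C m * X + C r) ^ k).coeff j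
      = if j ≤ k then (k.choose j : ℝ) * m ^ j * r ^ (k - j) else 0 := by
    intro k j
    rw [add_pow]
    rw [finset_sum_coeff]
    have : ∀ l ∈ range (k + 1), ((C m * X) ^ l * C r ^ (k - l) * (k.choose l : ℝ[X])).coeff j
        = if l = j then (k.choose j : ℝ) * m ^ j * r ^ (k - j) else 0 := by
      intro l hl
      have hth : (C m * X) ^ l * C r ^ (k - l) * (k.choose l : ℝ[X])
          = C ((k.choose l : ℝ) * m ^ l * r ^ (k - l)) * X ^ l := by
        rw [C_mul, C_mul, C_pow, C_pow, C_eq_natCast, mul_pow]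
        ring
      rw [hth, coeff_C_mul, coeff_X_pow]
      by_cases h : l = j
      · subst h; simp
      · rw [if_neg (fun hq => h hq.symm), if_neg h, mul_zero]
    rw [Finset.sum_congr rfl this, Finset.sum_ite_eq' (range (k + 1)) j]
    simp [Nat.lt_succ_iff]
  have hQc : Q.coeff i = ∑ k ∈ Icc i n, w n k * ((k.choose i : ℝ) * m ^ i * r ^ (k - i)) := by
    rw [hQ, finset_sum_coeff]
    simp only [coeff_C_mul, hpow, mul_ite, mul_zero]
    rw [← Finset.sum_filter]
    congr 1
    ext k
    simp [Nat.lt_succ_iff, and_comm]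
  have key : m ^ n * s₁ n i = ∑ k ∈ Icc i n, w n k * ((k.choose i : ℝ) * m ^ i * r ^ (k - i)) := by
    rw [← hPc, ← hQc, hPQ]
  have hmn : m ^ n = m ^ (n - i) * m ^ i := by
    rw [← pow_add, Nat.sub_add_cancel hin]
  have hmi : (m : ℝ) ^ i ≠ 0 := pow_ne_zero _ hm
  apply mul_right_cancel₀ hmi
  rw [show m ^ (n - i) * s₁ n i * m ^ i = m ^ n * s₁ n i by rw [hmn]; ring, key,
    Finset.sum_mul]
  apply Finset.sum_congr rfl
  intro k _
  ring
end

section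
/- The generalized Stirling numbers of the first kind and the generalized r-Whitney numbers of the first kind are related by m^{n-i}·s_α(n,i) = Σ_{k=i}^{n} C(k,i)·r^{k-i}·w_{m,r;α}(n,k) for 0 ≤ i ≤ n. -/
open Finset

lemma coeff_aux_stmt14 (m r : ℝ) (k i : ℕ) :
    ((Polynomial.C m * Polynomial.X + Polynomial.C r) ^ k).coeff i =
      (k.choose i : ℝ) * m ^ i * r ^ (k - i) := by
  rw [add_pow, Polynomial.finset_sum_coeff]
  have : ∀ j ∈ range (k + 1),
      ((Polynomial.C m * Polynomial.X) ^ j * Polynomial.C r ^ (k - j) *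
        (k.choose j : Polynomial ℝ)).coeff i =
      if i = j then (k.choose i : ℝ) * m ^ i * r ^ (k - i) else 0 := by
    intro j _
    have h1 : (Polynomial.C m * Polynomial.X) ^ j * Polynomial.C r ^ (k - j) *
        (k.choose j : Polynomial ℝ) =
        Polynomial.C ((k.choose j : ℝ) * m ^ j * r ^ (k - j)) * Polynomial.X ^ j := by
      simp only [mul_pow, ← Polynomial.C_pow, Polynomial.C_mul, Polynomial.C_eq_natCast]
      ring
    rw [h1, Polynomial.coeff_C_mul, Polynomial.coeff_X_pow]
    split_ifs with h
    · subst h; simp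
    · simp
  rw [Finset.sum_congr rfl this, Finset.sum_ite_eq (range (k + 1)) i]
  split_ifs with h
  · rfl
  · have : k < i := by simpa using (by simpa using h : ¬ i < k + 1)
    rw [Nat.choose_eq_zero_of_lt this]
    simp

theorem stmt_14 (m r : ℝ) (hm : m ≠ 0) (α : ℕ → ℝ)
    (s : ℕ → ℕ → ℝ) (w : ℕ → ℕ → ℝ)
    (hs : ∀ n : ℕ, ∀ x : ℝ, ∏ i ∈ range n, (x - α i) =
      ∑ i ∈ range (n + 1), s n i * x ^ i)
    (hw : ∀ n : ℕ, ∀ x : ℝ, m ^ n * ∏ i ∈ range n, (x - α i) =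
      ∑ k ∈ range (n + 1), w n k * (m * x + r) ^ k) :
    ∀ n i : ℕ, i ≤ n →
      m ^ (n - i) * s n i = ∑ k ∈ Icc i n, (k.choose i : ℝ) * r ^ (k - i) * w n k := by
  intro n i hi
  set P : Polynomial ℝ :=
    ∑ j ∈ range (n + 1), Polynomial.C (m ^ n * s n j) * Polynomial.X ^ j with hP
  set Q : Polynomial ℝ :=
    ∑ k ∈ range (n + 1), Polynomial.C (w n k) *
      (Polynomial.C m * Polynomial.X + Polynomial.C r) ^ k with hQ
  have hPQ : P = Q := by
    apply Polynomial.funext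
    intro x
    simp only [hP, hQ, Polynomial.eval_finset_sum, Polynomial.eval_mul, Polynomial.eval_C,
      Polynomial.eval_pow, Polynomial.eval_add, Polynomial.eval_X]
    calc ∑ j ∈ range (n + 1), m ^ n * s n j * x ^ j
        = m ^ n * ∑ j ∈ range (n + 1), s n j * x ^ j := by
          rw [Finset.mul_sum]; exact Finset.sum_congr rfl fun j _ => by ring
      _ = m ^ n * ∏ i ∈ range n, (x - α i) := by rw [← hs]
      _ = ∑ k ∈ range (n + 1), w n k * (m * x + r) ^ k := hw n x
  have hPc : P.coeff i = m ^ n * s n i := by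
    rw [hP, Polynomial.finset_sum_coeff]
    have : ∀ j ∈ range (n + 1),
        (Polynomial.C (m ^ n * s n j) * Polynomial.X ^ j).coeff i =
        if i = j then m ^ n * s n i else 0 := by
      intro j _
      rw [Polynomial.coeff_C_mul, Polynomial.coeff_X_pow]
      split_ifs with h
      · subst h; simp
      · simp
    rw [Finset.sum_congr rfl this, Finset.sum_ite_eq (range (n + 1)) i]
    simp [Nat.lt_succ_of_le hi]
  have hQc : Q.coeff i =
      ∑ k ∈ range (n + 1), w n k * ((k.choose i : ℝ) * m ^ i * r ^ (k - i)) := by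
    rw [hQ, Polynomial.finset_sum_coeff]
    exact Finset.sum_congr rfl fun k _ => by
      rw [Polynomial.coeff_C_mul, coeff_aux_stmt14]
  have key : m ^ n * s n i =
      m ^ i * ∑ k ∈ Icc i n, (k.choose i : ℝ) * r ^ (k - i) * w n k := by
    have h1 : ∑ k ∈ range (n + 1), w n k * ((k.choose i : ℝ) * m ^ i * r ^ (k - i)) =
        ∑ k ∈ Icc i n, w n k * ((k.choose i : ℝ) * m ^ i * r ^ (k - i)) := by
      symm
      apply Finset.sum_subset
      · intro k hk
        simp only [Finset.mem_Icc] at hk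
        simp [Nat.lt_succ_of_le hk.2]
      · intro k hk hk'
        simp only [Finset.mem_range, Finset.mem_Icc, not_and, not_le] at hk hk'
        have : k < i := by
          by_contra h
          exact absurd (hk' (le_of_not_gt h)) (by omega)
        rw [Nat.choose_eq_zero_of_lt this]
        simp
    rw [← hPc, hPQ, hQc, h1, Finset.mul_sum]
    exact Finset.sum_congr rfl fun k _ => by ring
  have hmn : m ^ n = m ^ i * m ^ (n - i) := by
    rw [← pow_add, Nat.add_sub_cancel' hi]
  rw [hmn, mul_assoc] at key
  exact mul_left_cancel₀ (pow_ne_zero i hm) key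
end

section
/- The generalized Stirling numbers of the second kind and the generalized r-Whitney numbers of the second kind are related by m^i·W_{m,r;α}(n,i) = Σ_{k=i}^{n} C(n,k)·m^k·r^{n-k}·S_α(k,i) for 0 ≤ i ≤ n. -/
open Finset

lemma newton_unique (α : ℕ → ℝ) (hα : ∀ i j : ℕ, i ≠ j → α i ≠ α j)
    (n : ℕ) (c : ℕ → ℝ)
    (h : ∀ x : ℝ, ∑ i ∈ range (n + 1), c i * ∏ j ∈ range i, (x - α j) = 0) :
    ∀ i, i ≤ n → c i = 0 := by
  intro i
  induction i using Nat.strong_induction_on with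
  | _ i ih =>
    intro hi
    have hx := h (α i)
    rw [Finset.sum_eq_single i] at hx
    · have hprod : (∏ j ∈ range i, (α i - α j)) ≠ 0 := by
        apply Finset.prod_ne_zero_iff.2
        intro j hj
        have hji : j < i := Finset.mem_range.1 hj
        exact sub_ne_zero.2 (hα i j (by omega))
      exact (mul_eq_zero.1 hx).resolve_right hprod
    · intro b hb hbi
      rcases lt_or_gt_of_ne hbi with hlt | hgt
      · rw [ih b hlt (by omega)]; ring
      · have : (∏ j ∈ range b, (α i - α j)) = 0 :=
          Finset.prod_eq_zero (Finset.mem_range.2 hgt) (by ring)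
        rw [this]; ring
    · intro hni; exact absurd (Finset.mem_range.2 (by omega)) hni

theorem stmt_15 (m r : ℝ) (hm : m ≠ 0) (α : ℕ → ℝ)
    (hα : ∀ i j : ℕ, i ≠ j → α i ≠ α j)
    (S : ℕ → ℕ → ℝ) (W : ℕ → ℕ → ℝ)
    (hS : ∀ k : ℕ, ∀ x : ℝ, x ^ k =
      ∑ i ∈ range (k + 1), S k i * ∏ j ∈ range i, (x - α j))
    (hW : ∀ n : ℕ, ∀ x : ℝ, (m * x + r) ^ n =
      ∑ i ∈ range (n + 1), W n i * m ^ i * ∏ j ∈ range i, (x - α j)) :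
    ∀ n i : ℕ, i ≤ n →
      m ^ i * W n i = ∑ k ∈ Icc i n, (n.choose k : ℝ) * m ^ k * r ^ (n - k) * S k i := by
  intro n
  set c : ℕ → ℝ := fun i =>
    m ^ i * W n i - ∑ k ∈ Icc i n, (n.choose k : ℝ) * m ^ k * r ^ (n - k) * S k i with hc
  have key : ∀ x : ℝ, ∑ i ∈ range (n + 1), c i * ∏ j ∈ range i, (x - α j) = 0 := by
    intro x
    have h1 : ∑ i ∈ range (n + 1), (m ^ i * W n i) * ∏ j ∈ range i, (x - α j)
        = (m * x + r) ^ n := by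
      rw [hW n x]; exact Finset.sum_congr rfl (fun i _ => by ring)
    have h2 : ∑ i ∈ range (n + 1),
        (∑ k ∈ Icc i n, (n.choose k : ℝ) * m ^ k * r ^ (n - k) * S k i)
          * ∏ j ∈ range i, (x - α j) = (m * x + r) ^ n := by
      have swap : ∑ i ∈ range (n + 1), ∑ k ∈ Icc i n,
          ((n.choose k : ℝ) * m ^ k * r ^ (n - k) * S k i) * ∏ j ∈ range i, (x - α j)
          = ∑ k ∈ range (n + 1), ∑ i ∈ range (k + 1),
          ((n.choose k : ℝ) * m ^ k * r ^ (n - k) * S k i) * ∏ j ∈ range i, (x - α j) := by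
        rw [Finset.sum_sigma', Finset.sum_sigma']
        apply Finset.sum_nbij' (fun p => ⟨p.2, p.1⟩) (fun p => ⟨p.2, p.1⟩) <;>
          simp only [Finset.mem_sigma, Finset.mem_range, Finset.mem_Icc] <;>
          intro p hp <;> first | omega | rfl | trivial
      calc ∑ i ∈ range (n + 1),
            (∑ k ∈ Icc i n, (n.choose k : ℝ) * m ^ k * r ^ (n - k) * S k i)
              * ∏ j ∈ range i, (x - α j)
          = ∑ i ∈ range (n + 1), ∑ k ∈ Icc i n,
            ((n.choose k : ℝ) * m ^ k * r ^ (n - k) * S k i) * ∏ j ∈ range i, (x - α j) := by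
            exact Finset.sum_congr rfl (fun i _ => by rw [Finset.sum_mul])
        _ = ∑ k ∈ range (n + 1), ∑ i ∈ range (k + 1),
            ((n.choose k : ℝ) * m ^ k * r ^ (n - k) * S k i) * ∏ j ∈ range i, (x - α j) :=
            swap
        _ = ∑ k ∈ range (n + 1), (n.choose k : ℝ) * m ^ k * r ^ (n - k) *
            ∑ i ∈ range (k + 1), S k i * ∏ j ∈ range i, (x - α j) := by
            refine Finset.sum_congr rfl (fun k _ => ?_)
            rw [Finset.mul_sum]
            exact Finset.sum_congr rfl (fun i _ => by ring)
        _ = ∑ k ∈ range (n + 1), (n.choose k : ℝ) * m ^ k * r ^ (n - k) * x ^ k := by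
            refine Finset.sum_congr rfl (fun k _ => ?_)
            rw [← hS k x]
        _ = (m * x + r) ^ n := by
            rw [add_pow]
            exact Finset.sum_congr rfl (fun k _ => by rw [mul_pow]; ring)
    calc ∑ i ∈ range (n + 1), c i * ∏ j ∈ range i, (x - α j)
        = (∑ i ∈ range (n + 1), (m ^ i * W n i) * ∏ j ∈ range i, (x - α j))
          - ∑ i ∈ range (n + 1),
            (∑ k ∈ Icc i n, (n.choose k : ℝ) * m ^ k * r ^ (n - k) * S k i)
              * ∏ j ∈ range i, (x - α j) := by
          rw [← Finset.sum_sub_distrib]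
          exact Finset.sum_congr rfl (fun i _ => by simp [hc]; ring)
      _ = 0 := by rw [h1, h2, sub_self]
  intro i hi
  have := newton_unique α hα n c key i hi
  have : m ^ i * W n i - ∑ k ∈ Icc i n, (n.choose k : ℝ) * m ^ k * r ^ (n - k) * S k i = 0 :=
    this
  linarith
end

section
/- The multiparameter Stirling numbers of the first kind connect the r-Whitney numbers of the second kind to the generalized r-Whitney numbers of the second kind: Σ_{k=i}^{n} m^{k-i}·W_{m,r}(n,k)·s(k,i;α) = W_{m,r;α}(n,i) for 0 ≤ i ≤ n. -/
open Finset

lemma newton_indep (α : ℕ → ℝ) (hα : ∀ i j : ℕ, i ≠ j → α i ≠ α j)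
    (c : ℕ → ℝ) (N : ℕ)
    (h : ∀ x : ℝ, ∑ i ∈ range (N + 1), c i * ∏ j ∈ range i, (x - α j) = 0) :
    ∀ i ≤ N, c i = 0 := by
  intro i
  induction i using Nat.strong_induction_on with
  | _ i IH =>
    intro hiN
    have hx := h (α i)
    have hsum : ∑ k ∈ range (N + 1), c k * ∏ j ∈ range k, (α i - α j)
        = c i * ∏ j ∈ range i, (α i - α j) := by
      apply Finset.sum_eq_single
      · intro k hk hki
        rcases lt_or_gt_of_ne hki with hlt | hgt
        · rw [IH k hlt (by omega), zero_mul]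
        · have : ∏ j ∈ range k, (α i - α j) = 0 :=
            Finset.prod_eq_zero (Finset.mem_range.mpr hgt) (by ring)
          rw [this, mul_zero]
      · intro hni
        exact absurd (Finset.mem_range.mpr (by omega)) hni
    have hprod : ∏ j ∈ range i, (α i - α j) ≠ 0 := by
      apply Finset.prod_ne_zero_iff.mpr
      intro j hj hz
      have hij : i ≠ j := by
        simp only [Finset.mem_range] at hj; omega
      exact hα i j hij (by linarith)
    rw [hsum] at hx
    exact (mul_eq_zero.mp hx).resolve_right hprod

theorem stmt_16 (m r : ℝ) (hm : m ≠ 0) (α : ℕ → ℝ)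
    (hα : ∀ i j : ℕ, i ≠ j → α i ≠ α j)
    (W : ℕ → ℕ → ℝ) (s : ℕ → ℕ → ℝ) (Wα : ℕ → ℕ → ℝ)
    (hW : ∀ n : ℕ, ∀ x : ℝ, (m * x + r) ^ n =
      ∑ k ∈ range (n + 1), W n k * m ^ k * ∏ i ∈ range k, (x - (i : ℝ)))
    (hs : ∀ n : ℕ, ∀ x : ℝ, ∏ i ∈ range n, (x - (i : ℝ)) =
      ∑ k ∈ range (n + 1), s n k * ∏ j ∈ range k, (x - α j))
    (hWα : ∀ n : ℕ, ∀ x : ℝ, (m * x + r) ^ n =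
      ∑ i ∈ range (n + 1), Wα n i * m ^ i * ∏ j ∈ range i, (x - α j)) :
    ∀ n i : ℕ, i ≤ n →
      ∑ k ∈ Icc i n, m ^ (k - i) * W n k * s k i = Wα n i := by
  intro n i hin
  set c : ℕ → ℝ := fun i => (∑ k ∈ Icc i n, m ^ k * W n k * s k i) - Wα n i * m ^ i with hc
  have hzero : ∀ x : ℝ, ∑ i ∈ range (n + 1), c i * ∏ j ∈ range i, (x - α j) = 0 := by
    intro x
    have h1 : (m * x + r) ^ n
        = ∑ i ∈ range (n + 1), (∑ k ∈ Icc i n, m ^ k * W n k * s k i)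
            * ∏ j ∈ range i, (x - α j) := by
      rw [hW n x]
      have : ∀ k ∈ range (n + 1),
          W n k * m ^ k * ∏ i ∈ range k, (x - (i : ℝ))
          = ∑ i ∈ range (k + 1), (m ^ k * W n k * s k i) * ∏ j ∈ range i, (x - α j) := by
        intro k _
        rw [hs k x, Finset.mul_sum]
        apply Finset.sum_congr rfl
        intro j _
        ring
      rw [Finset.sum_congr rfl this]
      rw [Finset.sum_comm' (s := range (n + 1)) (t := fun k => range (k + 1))
        (t' := range (n + 1)) (s' := fun i => Icc i n)
        (by intro k j; simp only [Finset.mem_range, Finset.mem_Icc]; omega)]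
      apply Finset.sum_congr rfl
      intro j _
      rw [Finset.sum_mul]
    have h2 := hWα n x
    calc ∑ i ∈ range (n + 1), c i * ∏ j ∈ range i, (x - α j)
        = (∑ i ∈ range (n + 1), (∑ k ∈ Icc i n, m ^ k * W n k * s k i)
            * ∏ j ∈ range i, (x - α j))
          - ∑ i ∈ range (n + 1), Wα n i * m ^ i * ∏ j ∈ range i, (x - α j) := by
          rw [← Finset.sum_sub_distrib]
          apply Finset.sum_congr rfl
          intro j _
          simp only [hc]
          ring
      _ = 0 := by rw [← h1, ← h2]; ring
  have hci : c i = 0 := newton_indep α hα c n hzero i hin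
  simp only [hc, sub_eq_zero] at hci
  apply mul_left_cancel₀ (pow_ne_zero i hm)
  rw [Finset.mul_sum]
  have : ∀ k ∈ Icc i n, m ^ i * (m ^ (k - i) * W n k * s k i)
      = m ^ k * W n k * s k i := by
    intro k hk
    simp only [Finset.mem_Icc] at hk
    rw [← mul_assoc, ← mul_assoc, ← pow_add]
    congr 3
    omega
  rw [Finset.sum_congr rfl this, hci]
  ring
end

section
/- The multiparameter Stirling numbers of the second kind are expressed via the generalized r-Whitney numbers of the first kind and r-Whitney numbers of the second kind: m^{n-i}·S(n,i;α) = Σ_{k=i}^{n} w_{m,r;α}(n,k)·W_{m,r}(k,i) for 0 ≤ i ≤ n. -/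
open Finset

lemma swap_sum (n : ℕ) (f : ℕ → ℕ → ℝ) :
    ∑ k ∈ range (n + 1), ∑ i ∈ range (k + 1), f k i
      = ∑ i ∈ range (n + 1), ∑ k ∈ Icc i n, f k i := by
  induction n with
  | zero => simp
  | succ n ih =>
    rw [Finset.sum_range_succ, ih, Finset.sum_range_succ
      (fun i => ∑ k ∈ Icc i (n + 1), f k i)]
    have h1 : ∀ i ∈ range (n + 1), ∑ k ∈ Icc i (n + 1), f k i
        = (∑ k ∈ Icc i n, f k i) + f (n + 1) i := by
      intro i hi
      have := Finset.mem_range.mp hi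
      exact Finset.sum_Icc_succ_top (by omega) _
    rw [Finset.sum_congr rfl h1, Finset.sum_add_distrib]
    rw [Finset.sum_range_succ (f (n + 1)) (n + 1), Finset.Icc_self, Finset.sum_singleton]
    ring

lemma indep_falling (N : ℕ) (c : ℕ → ℝ)
    (h : ∀ x : ℝ, ∑ i ∈ range (N + 1), c i * ∏ j ∈ range i, (x - (j : ℝ)) = 0) :
    ∀ i, i ≤ N → c i = 0 := by
  intro i
  induction i using Nat.strong_induction_on with
  | _ i ih =>
    intro hi
    have hx := h (i : ℝ)
    have hz : ∀ t ∈ range (N + 1), t ≠ i →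
        c t * ∏ j ∈ range t, ((i : ℝ) - (j : ℝ)) = 0 := by
      intro t ht hne
      rcases lt_or_gt_of_ne hne with hlt | hgt
      · rw [ih t hlt (le_trans hlt.le hi)]; ring
      · have : ∏ j ∈ range t, ((i : ℝ) - (j : ℝ)) = 0 :=
          Finset.prod_eq_zero (Finset.mem_range.mpr hgt) (by simp)
        rw [this]; ring
    rw [Finset.sum_eq_single_of_mem i (Finset.mem_range.mpr (by omega)) hz] at hx
    have hprod : ∏ j ∈ range i, ((i : ℝ) - (j : ℝ)) ≠ 0 := by
      apply Finset.prod_ne_zero_iff.mpr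
      intro j hj
      have : j < i := Finset.mem_range.mp hj
      have : (j : ℝ) < (i : ℝ) := by exact_mod_cast this
      linarith
    exact (mul_eq_zero.mp hx).resolve_right hprod

theorem stmt_17 (m r : ℝ) (hm : m ≠ 0) (α : ℕ → ℝ)
    (S : ℕ → ℕ → ℝ) (w : ℕ → ℕ → ℝ) (W : ℕ → ℕ → ℝ)
    (hS : ∀ n : ℕ, ∀ x : ℝ, ∏ j ∈ range n, (x - α j) =
      ∑ i ∈ range (n + 1), S n i * ∏ j ∈ range i, (x - (j : ℝ)))
    (hw : ∀ n : ℕ, ∀ x : ℝ, m ^ n * ∏ j ∈ range n, (x - α j) =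
      ∑ k ∈ range (n + 1), w n k * (m * x + r) ^ k)
    (hW : ∀ k : ℕ, ∀ x : ℝ, (m * x + r) ^ k =
      ∑ i ∈ range (k + 1), W k i * m ^ i * ∏ j ∈ range i, (x - (j : ℝ))) :
    ∀ n i : ℕ, i ≤ n →
      m ^ (n - i) * S n i = ∑ k ∈ Icc i n, w n k * W k i := by
  intro n i hi
  set c : ℕ → ℝ := fun i =>
    m ^ n * S n i - m ^ i * ∑ k ∈ Icc i n, w n k * W k i with hc
  have hzero : ∀ x : ℝ,
      ∑ i ∈ range (n + 1), c i * ∏ j ∈ range i, (x - (j : ℝ)) = 0 := by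
    intro x
    have e1 : ∑ i ∈ range (n + 1),
        (m ^ n * S n i) * ∏ j ∈ range i, (x - (j : ℝ))
        = m ^ n * ∏ j ∈ range n, (x - α j) := by
      rw [hS n x, Finset.mul_sum]
      exact Finset.sum_congr rfl (fun ii _ => by ring)
    have e2 : ∑ i ∈ range (n + 1),
        (m ^ i * ∑ k ∈ Icc i n, w n k * W k i) * ∏ j ∈ range i, (x - (j : ℝ))
        = m ^ n * ∏ j ∈ range n, (x - α j) := by
      rw [hw n x]
      have : ∀ k ∈ range (n + 1), w n k * (m * x + r) ^ k
          = ∑ i ∈ range (k + 1),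
              w n k * W k i * m ^ i * ∏ j ∈ range i, (x - (j : ℝ)) := by
        intro k _
        rw [hW k x, Finset.mul_sum]
        apply Finset.sum_congr rfl
        intro ii _; ring
      rw [Finset.sum_congr rfl this,
        swap_sum n (fun k ii => w n k * W k ii * m ^ ii * ∏ j ∈ range ii, (x - (j : ℝ)))]
      apply Finset.sum_congr rfl
      intro ii _
      rw [Finset.mul_sum, Finset.sum_mul]
      apply Finset.sum_congr rfl
      intro k _; ring
    calc ∑ i ∈ range (n + 1), c i * ∏ j ∈ range i, (x - (j : ℝ))
        = (∑ i ∈ range (n + 1), (m ^ n * S n i) * ∏ j ∈ range i, (x - (j : ℝ)))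
          - ∑ i ∈ range (n + 1),
              (m ^ i * ∑ k ∈ Icc i n, w n k * W k i) * ∏ j ∈ range i, (x - (j : ℝ)) := by
          rw [← Finset.sum_sub_distrib]
          apply Finset.sum_congr rfl
          intro ii _; simp [hc]; ring
      _ = 0 := by rw [e1, e2, sub_self]
  have hci := indep_falling n c hzero i hi
  have h2 : m ^ n * S n i = m ^ i * ∑ k ∈ Icc i n, w n k * W k i := by
    have := sub_eq_zero.mp hci
    simpa [hc] using this
  have hpow : m ^ n = m ^ i * m ^ (n - i) := by
    rw [← pow_add]; congr 1; omega
  apply mul_left_cancel₀ (pow_ne_zero i hm)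
  rw [← h2, hpow]; ring
end

section
/- The r-Whitney numbers of the second kind decompose through the generalized r-Whitney numbers of the second kind and the multiparameter Stirling numbers of the second kind: W_{m,r}(n,k) = Σ_{i=k}^{n} W_{m,r;α}(n,i)·S(i,k;α)·m^{i-k} for 0 ≤ k ≤ n. -/
open Finset

theorem stmt_18 (m r : ℝ) (hm : m ≠ 0) (α : ℕ → ℝ)
    (hα : ∀ i j : ℕ, i ≠ j → α i ≠ α j)
    (W : ℕ → ℕ → ℝ) (Wα : ℕ → ℕ → ℝ) (S : ℕ → ℕ → ℝ)
    (hW : ∀ n : ℕ, ∀ x : ℝ, (m * x + r) ^ n =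
      ∑ k ∈ range (n + 1), W n k * m ^ k * ∏ i ∈ range k, (x - (i : ℝ)))
    (hWα : ∀ n : ℕ, ∀ x : ℝ, (m * x + r) ^ n =
      ∑ i ∈ range (n + 1), Wα n i * m ^ i * ∏ j ∈ range i, (x - α j))
    (hS : ∀ i : ℕ, ∀ x : ℝ, ∏ j ∈ range i, (x - α j) =
      ∑ k ∈ range (i + 1), S i k * ∏ j ∈ range k, (x - (j : ℝ))) :
    ∀ n k : ℕ, k ≤ n →
      W n k = ∑ i ∈ Icc k n, Wα n i * S i k * m ^ (i - k) := by
  intro n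
  set c : ℕ → ℝ := fun j => ∑ i ∈ Icc j n, Wα n i * S i j * m ^ (i - j) with hc
  have key : ∀ x : ℝ, ∑ j ∈ range (n + 1),
      (W n j - c j) * m ^ j * ∏ i ∈ range j, (x - (i : ℝ)) = 0 := by
    intro x
    have h1 : (m * x + r) ^ n
        = ∑ j ∈ range (n + 1), c j * m ^ j * ∏ i ∈ range j, (x - (i : ℝ)) := by
      rw [hWα n x]
      calc ∑ i ∈ range (n+1), Wα n i * m ^ i * ∏ j ∈ range i, (x - α j)
          = ∑ i ∈ range (n+1), ∑ j ∈ range (i+1),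
              Wα n i * m ^ i * (S i j * ∏ t ∈ range j, (x - (t:ℝ))) := by
            refine Finset.sum_congr rfl fun i _ => ?_
            rw [hS i x, Finset.mul_sum]
        _ = ∑ j ∈ range (n+1), ∑ i ∈ Icc j n,
              Wα n i * m ^ i * (S i j * ∏ t ∈ range j, (x - (t:ℝ))) := by
            refine Finset.sum_comm' fun i j => ?_
            simp only [Finset.mem_range, Finset.mem_Icc]
            omega
        _ = ∑ j ∈ range (n+1), c j * m ^ j * ∏ i ∈ range j, (x - (i:ℝ)) := by
            refine Finset.sum_congr rfl fun j _ => ?_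
            rw [hc]
            simp only [Finset.sum_mul]
            refine Finset.sum_congr rfl fun i hi => ?_
            have hji : j ≤ i := (Finset.mem_Icc.mp hi).1
            have hmi : m ^ i = m ^ (i - j) * m ^ j := by
              rw [← pow_add]; congr 1; omega
            rw [hmi]; ring
    have h2 := hW n x
    simp only [sub_mul, Finset.sum_sub_distrib]
    rw [← h2, ← h1, sub_self]
  suffices h : ∀ j, j ≤ n → W n j = c j by
    intro k hk; exact h k hk
  intro k
  induction k using Nat.strong_induction_on with
  | _ k IH =>
    intro hk
    have hx := key (k : ℝ)
    have hsum : ∑ j ∈ range (n+1), (W n j - c j) * m ^ j * ∏ i ∈ range j, ((k:ℝ) - i)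
        = (W n k - c k) * m ^ k * ∏ i ∈ range k, ((k:ℝ) - i) := by
      apply Finset.sum_eq_single_of_mem k (Finset.mem_range.mpr (by omega))
      intro j hj hjk
      rcases lt_or_gt_of_ne hjk with h | h
      · rw [IH j h (by omega)]; simp
      · rw [Finset.prod_eq_zero (Finset.mem_range.mpr h) (sub_self (k:ℝ)), mul_zero]
    rw [hsum] at hx
    have hprod : ∏ i ∈ range k, ((k:ℝ) - i) ≠ 0 := by
      apply Finset.prod_ne_zero_iff.mpr
      intro i hi
      have h1 : i < k := Finset.mem_range.mp hi
      have h2 : (i : ℝ) < k := by exact_mod_cast h1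
      exact sub_ne_zero.mpr (ne_of_gt h2)
    have hzero : W n k - c k = 0 := by
      by_contra h
      exact (mul_ne_zero (mul_ne_zero h (pow_ne_zero k hm)) hprod) hx
    linarith
end
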